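/- Consider iterates of the Reflected Gradient (RG) method on a closed convex set Z with monotone L-Lipschitz operator F: z_{t+1/2} = 2z_t - z_{t-1}, z_{t+1} = Π_Z[z_t - ηF(z_{t+1/2})], with c_{t+1} := (z_t - ηF(z_{t+1/2}) - z_{t+1})/η ∈ N_Z(z_{t+1}). Define P_t = ‖F(z_t)+c_t‖² + ‖F(z_t)-F(z_{t-1/2})‖². If 0 < η < 1/((1+√2)L), then P_{t+1} ≤ P_t for all t ≥ 1. -/
import Mathlib
open scoped RealInnerProductSpace

lemma key_sos {E : Type*} [NormedAddCommGroup E] [InnerProductSpace ℝ E]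
    (a b p q : E) (α : ℝ) (hα0 : 0 ≤ α) (hαb : α ≤ Real.sqrt 2 - 1)
    (h1 : ⟪b - a, b - q⟫ ≤ 0) (h2 : ‖q‖ ≤ α * ‖a - b - p + q‖) :
    ‖b‖ ^ 2 + ‖q‖ ^ 2 ≤ ‖a‖ ^ 2 + ‖p‖ ^ 2 := by
  set s := Real.sqrt 2 with hs
  have hs2 : s ^ 2 = 2 := Real.sq_sqrt (by norm_num)
  have hs0 : (0:ℝ) ≤ s := Real.sqrt_nonneg 2
  have hs1 : (11:ℝ)/8 ≤ s := by nlinarith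
  have h2' : ‖q‖ ^ 2 ≤ (s - 1) ^ 2 * ‖a - b - p + q‖ ^ 2 := by
    have hn : (0:ℝ) ≤ ‖a - b - p + q‖ := norm_nonneg _
    have hq : (0:ℝ) ≤ ‖q‖ := norm_nonneg _
    have h2a : ‖q‖ ≤ (s - 1) * ‖a - b - p + q‖ :=
      h2.trans (mul_le_mul_of_nonneg_right hαb hn)
    calc ‖q‖ ^ 2 ≤ ((s - 1) * ‖a - b - p + q‖) ^ 2 := pow_le_pow_left₀ hq h2a 2
      _ = (s - 1) ^ 2 * ‖a - b - p + q‖ ^ 2 := by ring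
  have e1 : ‖a - b - p + q‖ ^ 2 = ⟪a,a⟫ + ⟪b,b⟫ + ⟪p,p⟫ + ⟪q,q⟫
      - 2*⟪a,b⟫ - 2*⟪a,p⟫ + 2*⟪a,q⟫ + 2*⟪b,p⟫ - 2*⟪b,q⟫ - 2*⟪p,q⟫ := by
    rw [← real_inner_self_eq_norm_sq]
    simp only [inner_sub_left, inner_sub_right, inner_add_left, inner_add_right]
    rw [real_inner_comm b a, real_inner_comm p a, real_inner_comm q a,
      real_inner_comm p b, real_inner_comm q b, real_inner_comm q p]
    ring
  have e2 : ‖a - b + p + q‖ ^ 2 = ⟪a,a⟫ + ⟪b,b⟫ + ⟪p,p⟫ + ⟪q,q⟫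
      - 2*⟪a,b⟫ + 2*⟪a,p⟫ + 2*⟪a,q⟫ - 2*⟪b,p⟫ - 2*⟪b,q⟫ + 2*⟪p,q⟫ := by
    rw [← real_inner_self_eq_norm_sq]
    simp only [inner_sub_left, inner_sub_right, inner_add_left, inner_add_right]
    rw [real_inner_comm b a, real_inner_comm p a, real_inner_comm q a,
      real_inner_comm p b, real_inner_comm q b, real_inner_comm q p]
    ring
  have e3 : ⟪b - a, b - q⟫ = ⟪b,b⟫ - ⟪b,q⟫ - ⟪a,b⟫ + ⟪a,q⟫ := by
    simp only [inner_sub_left, inner_sub_right]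
    rw [real_inner_comm b a]
    ring
  have ea : ‖a‖ ^ 2 = ⟪a,a⟫ := (real_inner_self_eq_norm_sq a).symm
  have eb : ‖b‖ ^ 2 = ⟪b,b⟫ := (real_inner_self_eq_norm_sq b).symm
  have ep : ‖p‖ ^ 2 = ⟪p,p⟫ := (real_inner_self_eq_norm_sq p).symm
  have eq' : ‖q‖ ^ 2 = ⟪q,q⟫ := (real_inner_self_eq_norm_sq q).symm
  have hV : (0:ℝ) ≤ ‖a - b - p + q‖ ^ 2 := sq_nonneg _
  have hS : (0:ℝ) ≤ ‖a - b + p + q‖ ^ 2 := sq_nonneg _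
  rw [e3] at h1
  rw [ea, eb, ep, eq']
  rw [e1] at h2' hV
  rw [e2] at hS
  rw [eq'] at h2'
  nlinarith [mul_nonneg (by nlinarith : (0:ℝ) ≤ 8*s - 11) hV, hV, hS, h1, h2']

theorem stmt_14 (n : ℕ) (Z : Set (EuclideanSpace ℝ (Fin n)))
    (hZ_closed : IsClosed Z) (hZ_convex : Convex ℝ Z)
    (F : EuclideanSpace ℝ (Fin n) → EuclideanSpace ℝ (Fin n))
    (L η : ℝ) (hL : 0 < L) (hη0 : 0 < η) (hη1 : η < 1 / ((1 + Real.sqrt 2) * L))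
    (hF_mono : ∀ a b, 0 ≤ ⟪F a - F b, a - b⟫)
    (hF_lip : ∀ a b, ‖F a - F b‖ ≤ L * ‖a - b‖)
    (z w c : ℤ → EuclideanSpace ℝ (Fin n))
    (hz_init : z (-1) = z 0)
    (hz_mem : ∀ t : ℤ, 0 ≤ t → z t ∈ Z)
    (hw : ∀ t : ℤ, 0 ≤ t → w t = (2 : ℝ) • z t - z (t - 1))
    (hc : ∀ t : ℤ, 0 ≤ t → η • c (t + 1) = z t - η • F (w t) - z (t + 1))
    (hc_nc : ∀ t : ℤ, 1 ≤ t → ∀ z' ∈ Z, ⟪c t, z' - z t⟫ ≤ 0) :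
    ∀ t : ℤ, 1 ≤ t →
      ‖F (z (t + 1)) + c (t + 1)‖ ^ 2 + ‖F (z (t + 1)) - F (w t)‖ ^ 2 ≤
        ‖F (z t) + c t‖ ^ 2 + ‖F (z t) - F (w (t - 1))‖ ^ 2 := by
  intro t ht
  set a := F (z t) + c t with ha
  set b := F (z (t + 1)) + c (t + 1) with hb
  set p := F (z t) - F (w (t - 1)) with hp
  set q := F (z (t + 1)) - F (w t) with hq
  -- step equations
  have hct : η • c (t + 1) = z t - η • F (w t) - z (t + 1) := hc t (by omega)
  have hct' : η • c t = z (t - 1) - η • F (w (t - 1)) - z t := by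
    have := hc (t - 1) (by omega)
    simpa [sub_add_cancel] using this
  have hzdiff : z (t + 1) - z t = (-η) • (b - q) := by
    have hbq : b - q = c (t + 1) + F (w t) := by rw [hb, hq]; abel
    rw [hbq, smul_add, neg_smul, neg_smul, hct]
    abel
  have hwz : w t - z t = (-η) • (a - p) := by
    have hap : a - p = c t + F (w (t - 1)) := by rw [ha, hp]; abel
    have hw' : w t = (2:ℝ) • z t - z (t - 1) := hw t (by omega)
    rw [hap, smul_add, neg_smul, neg_smul, hw', two_smul]
    rw [hct']
    abel
  have hzw : z (t + 1) - w t = η • (a - b - p + q) := by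
    have : z (t + 1) - w t = (z (t + 1) - z t) - (w t - z t) := by abel
    rw [this, hzdiff, hwz]
    module
  -- monotonicity of F + normal cone
  have hmono : (0:ℝ) ≤ ⟪b - a, z (t + 1) - z t⟫ := by
    have h1 : (0:ℝ) ≤ ⟪F (z (t + 1)) - F (z t), z (t + 1) - z t⟫ := hF_mono _ _
    have h2 : ⟪c (t + 1), z t - z (t + 1)⟫ ≤ 0 :=
      hc_nc (t + 1) (by omega) (z t) (hz_mem t (by omega))
    have h3 : ⟪c t, z (t + 1) - z t⟫ ≤ 0 :=
      hc_nc t (by omega) (z (t + 1)) (hz_mem (t + 1) (by omega))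
    have hba : b - a = (F (z (t + 1)) - F (z t)) + (c (t + 1) - c t) := by
      rw [hb, ha]; abel
    rw [hba, inner_add_left]
    have h2' : (0:ℝ) ≤ ⟪c (t + 1), z (t + 1) - z t⟫ := by
      have : z (t + 1) - z t = -(z t - z (t + 1)) := by abel
      rw [this, inner_neg_right]
      linarith
    have : ⟪c (t + 1) - c t, z (t + 1) - z t⟫ =
        ⟪c (t + 1), z (t + 1) - z t⟫ - ⟪c t, z (t + 1) - z t⟫ := inner_sub_left _ _ _
    linarith
  have h1 : ⟪b - a, b - q⟫ ≤ 0 := by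
    rw [hzdiff, real_inner_smul_right] at hmono
    nlinarith
  -- Lipschitz
  have h2 : ‖q‖ ≤ (L * η) * ‖a - b - p + q‖ := by
    have := hF_lip (z (t + 1)) (w t)
    rw [hzw, norm_smul] at this
    calc ‖q‖ ≤ L * (|η| * ‖a - b - p + q‖) := this
      _ = (L * η) * ‖a - b - p + q‖ := by rw [abs_of_pos hη0]; ring
  -- stepsize bound
  have hs0 : (0:ℝ) ≤ Real.sqrt 2 := Real.sqrt_nonneg 2
  have hs2 : Real.sqrt 2 ^ 2 = 2 := Real.sq_sqrt (by norm_num)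
  have hαb : L * η ≤ Real.sqrt 2 - 1 := by
    have hpos : (0:ℝ) < (1 + Real.sqrt 2) * L := by positivity
    have hkey : η * ((1 + Real.sqrt 2) * L) < 1 := (lt_div_iff₀ hpos).mp hη1
    nlinarith
  exact key_sos a b p q (L * η) (by positivity) hαb h1 h2
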